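/- Let u, v ∈ {0,1}^n be two vertices of the hypercube C_n, and let T_{C_n,w}(x) denote the weighted enumerator of spanning trees rooted at w (arcs directed toward w, weight x_{i,ε} per arc of direction i and spin ε). Then T_{C_n,u}(x) · ∏_{i=1}^n x_{i,v_i} = T_{C_n,v}(x) · ∏_{i=1}^n x_{i,u_i}. -/

import Mathlib

open scoped Classical
open Polynomial

noncomputable section

/-- A rooted (spanning) forest of the digraph with arc relation `A`:
every vertex has at most one outgoing arc (encoded by `f : V → Option V`),
all arcs of the forest are arcs of the digraph, and there is no directed cycle. -/
def IsRootedForest {V : Type*} (A : V → V → Prop) (f : V → Option V) : Prop :=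
  (∀ v w : V, f v = some w → A v w) ∧
  ∀ v : V, ¬ Relation.TransGen (fun a b : V => f a = some b) v v

/-- The number of components (= roots) of a rooted forest. -/
def numRoots {V : Type*} [Fintype V] (f : V → Option V) : ℕ :=
  (Finset.univ.filter fun v => f v = none).card

/-- The rooted-forest enumerator of a weighted digraph:
`∑_F t^(#components of F) ∏_{arcs (v,w) ∈ F} wgt v w`. -/
def forestEnum {V : Type*} [Fintype V] {R : Type*} [CommRing R]
    (A : V → V → Prop) (wgt : V → V → R) (t : R) : R :=
  ∑ f ∈ Finset.univ.filter (fun f : V → Option V => IsRootedForest A f),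
    ∏ v : V, (f v).elim t (wgt v)

/-- Arc relation of the `n`-dimensional hypercube on `{0,1}^n`:
an arc from `u` to `v` flips exactly one coordinate. -/
def cubeArc (n : ℕ) (u v : Fin n → Bool) : Prop :=
  ∃ i : Fin n, v = Function.update u i (!(u i))

/-- Weight of a hypercube arc: an arc of direction `i` and spin `ε`
(i.e. flipping coordinate `i` to the value `ε`) has weight `x i ε`. -/
def cubeWeight {R : Type*} [CommRing R] (n : ℕ) (x : Fin n → Bool → R)
    (u v : Fin n → Bool) : R :=
  ∑ i : Fin n, if v = Function.update u i (!(u i)) then x i (v i) else 0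

end

open scoped Classical in
/-- Enumerator of spanning trees of the hypercube `C_n` rooted at `w`: sum over
rooted spanning forests with unique root `w` (i.e. spanning trees oriented toward
`w`) of the product of the weights `x i ε` of their arcs. -/
noncomputable def cubeTreeEnum {R : Type*} [CommRing R] (n : ℕ)
    (x : Fin n → Bool → R) (w : Fin n → Bool) : R :=
  ∑ f ∈ Finset.univ.filter
      (fun f : (Fin n → Bool) → Option (Fin n → Bool) =>
        IsRootedForest (cubeArc n) f ∧ f w = none ∧ ∀ u, u ≠ w → f u ≠ none),
    ∏ u : Fin n → Bool, (f u).elim 1 (cubeWeight n x u)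

noncomputable section


namespace RerootAux

variable {V : Type*}

/-- single step of the functional digraph -/
def step (f : V → Option V) (a b : V) : Prop := f a = some b

abbrev RTG (f : V → Option V) : V → V → Prop := Relation.ReflTransGen (step f)

lemma step_fun {f : V → Option V} {a b c : V} (h1 : step f a b) (h2 : step f a c) : b = c :=
  Option.some.inj (h1.symm.trans h2)

section basic

variable {f : V → Option V} {u v : V}

/-- acyclicity -/
def Acy (f : V → Option V) : Prop := ∀ a, ¬ Relation.TransGen (step f) a a

lemma wf [Finite V] (hf : Acy f) :
    WellFounded (fun b a => Relation.TransGen (step f) a b) := by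
  have h1 : IsIrrefl V (fun b a => Relation.TransGen (step f) a b) := ⟨fun a h => hf a h⟩
  have h2 : IsTrans V (fun b a => Relation.TransGen (step f) a b) :=
    ⟨fun a b c hab hbc => hbc.trans hab⟩
  exact Finite.wellFounded_of_trans_of_irrefl _

lemma reaches_root [Finite V] (hf : Acy f) (hs : ∀ a, a ≠ u → f a ≠ none) (a : V) :
    RTG f a u := by
  induction a using (wf hf).induction with
  | _ a ih =>
    by_cases hau : a = u
    · subst hau; exact .refl
    · obtain ⟨b, hb⟩ := Option.ne_none_iff_exists'.mp (hs a hau)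
      exact Relation.ReflTransGen.head hb (ih b (Relation.TransGen.single hb))

lemma chain {a b : V} (h1 : RTG f v a) (h2 : RTG f v b) : RTG f a b ∨ RTG f b a := by
  induction h1 with
  | refl => exact Or.inl h2
  | tail hpre hstep ih =>
    rename_i b' a'
    rcases ih with h | h
    · rcases h.cases_head with rfl | ⟨c, hc, hcb⟩
      · exact Or.inr (Relation.ReflTransGen.single hstep)
      · rw [step_fun hc hstep] at hcb
        exact Or.inl hcb
    · exact Or.inr (h.tail hstep)

lemma pred_unique_aux (hf : Acy f) {a b b' : V} (h : RTG f b b')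
    (hb : step f b a) (hb' : step f b' a) : b = b' := by
  rcases h.cases_head with rfl | ⟨c, hc, hcb'⟩
  · rfl
  · rw [step_fun hc hb] at hcb'
    exact absurd (Relation.TransGen.tail' hcb' hb') (hf a)

lemma pred_unique (hf : Acy f) {a b b' : V} (h1 : RTG f v b) (h2 : RTG f v b')
    (hb : step f b a) (hb' : step f b' a) : b = b' := by
  rcases chain h1 h2 with h | h
  · exact pred_unique_aux hf h hb hb'
  · exact (pred_unique_aux hf h hb' hb).symm

end basic

/-- the predecessor of `a` on the path from `v` to the root -/
noncomputable def pred (f : V → Option V) (v a : V) : V :=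
  if h : ∃ b, RTG f v b ∧ step f b a then h.choose else a

/-- re-root the tree `f` at `v`, reversing the arcs on the path from `v` to the old root -/
noncomputable def reroot (f : V → Option V) (v : V) : V → Option V :=
  fun a => if a = v then none else if RTG f v a then some (pred f v a) else f a

section pred

variable {f : V → Option V} {u v a b : V}

lemma exists_pred (ha : RTG f v a) (hav : a ≠ v) : ∃ b, RTG f v b ∧ step f b a := by
  rcases ha.cases_tail with rfl | h
  · exact absurd rfl hav
  · exact h

lemma pred_spec (ha : RTG f v a) (hav : a ≠ v) :
    RTG f v (pred f v a) ∧ step f (pred f v a) a := by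
  have h := exists_pred ha hav
  rw [pred, dif_pos h]
  exact h.choose_spec

lemma pred_eq (hf : Acy f) (hb : RTG f v b) (hba : step f b a) : pred f v a = b := by
  have h : ∃ c, RTG f v c ∧ step f c a := ⟨b, hb, hba⟩
  rw [pred, dif_pos h]
  exact pred_unique hf h.choose_spec.1 hb h.choose_spec.2 hba

lemma reroot_root : reroot f v v = none := if_pos rfl

lemma reroot_eq_of_path (hf : Acy f) (ha : RTG f v a) (hav : a ≠ v)
    (hb : RTG f v b) (hba : step f b a) : reroot f v a = some b := by
  rw [reroot, if_neg hav, if_pos ha, pred_eq hf hb hba]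

lemma reroot_eq_off (ha : ¬ RTG f v a) : reroot f v a = f a := by
  have hav : a ≠ v := by rintro rfl; exact ha .refl
  rw [reroot, if_neg hav, if_neg ha]

end pred

lemma reroot_path_eq {f : V → Option V} {v a : V} (ha : RTG f v a) (hav : a ≠ v) :
    reroot f v a = some (pred f v a) := by
  rw [reroot, if_neg hav, if_pos ha]

section tree
set_option linter.unusedSectionVars false
variable [Finite V] {f : V → Option V} {u v : V}

/-- any vertex on the path from `v` reaches `v` in the re-rooted tree -/
lemma path_to_v (hf : Acy f) {a : V} (ha : RTG f v a) : RTG (reroot f v) a v := by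
  induction ha with
  | refl => exact .refl
  | @tail b c hpre hstep ih =>
    by_cases hcv : c = v
    · subst hcv; exact .refl
    · have hstep' : step (reroot f v) c b :=
        reroot_eq_of_path hf (hpre.tail hstep) hcv hpre hstep
      exact Relation.ReflTransGen.head hstep' ih

lemma all_to_v (hf : Acy f) (hs : ∀ a, a ≠ u → f a ≠ none) (a : V) :
    RTG (reroot f v) a v := by
  have h := reaches_root (u := u) hf hs a
  induction h using Relation.ReflTransGen.head_induction_on with
  | refl => exact path_to_v hf (reaches_root hf hs v)
  | @head a' b hstep _ ih =>
    by_cases hp : RTG f v a'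
    · exact path_to_v hf hp
    · have : step (reroot f v) a' b := by rw [step, reroot_eq_off hp]; exact hstep
      exact Relation.ReflTransGen.head this ih

lemma cycle_propagate {g : V → Option V} {a b : V}
    (h : Relation.TransGen (step g) a a) (hab : RTG g a b) :
    Relation.TransGen (step g) b b := by
  induction hab with
  | refl => exact h
  | @tail c d hpre hstep ih =>
    obtain ⟨e, he, hec⟩ := (Relation.TransGen.head'_iff).mp ih
    rw [step_fun he hstep] at hec
    exact Relation.TransGen.tail' hec hstep

lemma reroot_acy (hf : Acy f) (hs : ∀ a, a ≠ u → f a ≠ none) :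
    Acy (reroot f v) := by
  intro a hcyc
  have h := cycle_propagate hcyc (all_to_v (u := u) hf hs a)
  obtain ⟨e, he, -⟩ := (Relation.TransGen.head'_iff).mp h
  rw [step, reroot_root] at he
  exact nomatch he

lemma reroot_none_iff (hf : Acy f) (hs : ∀ a, a ≠ u → f a ≠ none) {a : V} (hav : a ≠ v) :
    reroot f v a ≠ none := by
  by_cases hp : RTG f v a
  · rw [reroot_path_eq hp hav]
    simp
  · rw [reroot_eq_off hp]
    exact hs a (by rintro rfl; exact hp (reaches_root hf hs v))

/-- path from `v` in `f` sits inside the reachable set from `u` in the re-rooted tree -/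
lemma fpath_sub_gpath (hf : Acy f) (hs : ∀ a, a ≠ u → f a ≠ none) (a : V) :
    RTG f v a → RTG (reroot f v) u a := by
  have h := reaches_root (u := u) hf hs a
  induction h using Relation.ReflTransGen.head_induction_on with
  | refl => intro _; exact .refl
  | @head a' c hstep hrest ih =>
    intro hva'
    have hvc : RTG f v c := hva'.tail hstep
    have hcv : c ≠ v := by
      rintro rfl; exact hf _ (Relation.TransGen.tail' hva' hstep)
    have hgc : step (reroot f v) c a' := reroot_eq_of_path hf hvc hcv hva' hstep
    exact (ih hvc).tail hgc

/-- reachable set from `u` in the re-rooted tree is inside the path from `v` in `f` -/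
lemma gpath_sub_fpath (hf : Acy f) (hs : ∀ a, a ≠ u → f a ≠ none) {a : V}
    (h : RTG (reroot f v) u a) : RTG f v a := by
  induction h with
  | refl => exact reaches_root hf hs v
  | @tail b c hpre hstep ih =>
    have hbv : b ≠ v := by
      rintro rfl
      rw [step, reroot_root] at hstep
      exact nomatch hstep
    have heq : reroot f v b = some (pred f v b) := reroot_path_eq ih hbv
    have hc : pred f v b = c := Option.some.inj (heq.symm.trans hstep)
    rw [← hc]
    exact (pred_spec ih hbv).1

/-- rerooting back recovers the original tree -/
lemma reroot_reroot (hf : Acy f) (hr : f u = none) (hs : ∀ a, a ≠ u → f a ≠ none) :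
    reroot (reroot f v) u = f := by
  set g := reroot f v with hg
  have hgacy : Acy g := reroot_acy (u := u) hf hs
  funext a
  by_cases hau : a = u
  · subst hau; rw [reroot_root, hr]
  · by_cases hva : RTG f v a
    · obtain ⟨c, hc⟩ := Option.ne_none_iff_exists'.mp (hs a hau)
      have hvc : RTG f v c := hva.tail hc
      have hcv : c ≠ v := by
        rintro rfl; exact hf _ (Relation.TransGen.tail' hva hc)
      have hgc : step g c a := reroot_eq_of_path hf hvc hcv hva hc
      have hguc : RTG g u c := fpath_sub_gpath hf hs c hvc
      have hgua : RTG g u a := fpath_sub_gpath hf hs a hva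
      rw [reroot_eq_of_path hgacy hgua hau hguc hgc, hc]
    · have hga : ¬ RTG g u a := fun h => hva (gpath_sub_fpath hf hs h)
      rw [reroot_eq_off hga, hg, reroot_eq_off hva]

end tree
end RerootAux

end

namespace RerootAux
noncomputable section

section seg
variable {V : Type*} [Fintype V] [DecidableEq V] {f : V → Option V} {u v : V}

def seg (f : V → Option V) (a : V) : Finset V := Finset.univ.filter (fun c => RTG f a c)

lemma mem_seg {a c : V} : c ∈ seg f a ↔ RTG f a c := by simp [seg]

lemma seg_root (hr : f u = none) : seg f u = {u} := by
  ext c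
  simp only [mem_seg, Finset.mem_singleton]
  constructor
  · intro h
    rcases h.cases_head with rfl | ⟨d, hd, -⟩
    · rfl
    · rw [step, hr] at hd; exact nomatch hd
  · rintro rfl; exact .refl

lemma not_mem_seg_self (hf : Acy f) {a b : V} (hab : step f a b) : a ∉ seg f b := by
  rw [mem_seg]
  intro h
  exact hf a (Relation.TransGen.head' hab h)

lemma seg_insert (hf : Acy f) {a b : V} (hab : step f a b) :
    seg f a = insert a (seg f b) := by
  ext c
  simp only [mem_seg, Finset.mem_insert]
  constructor
  · intro h
    rcases h.cases_head with rfl | ⟨d, hd, hdc⟩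
    · exact Or.inl rfl
    · rw [step_fun hd hab] at hdc
      exact Or.inr hdc
  · rintro (rfl | h)
    · exact .refl
    · exact Relation.ReflTransGen.head hab h

end seg

section cube
variable {R : Type*} [CommRing R] {n : ℕ} (x : Fin n → Bool → R)

lemma flip_flip {a b : Fin n → Bool} {i : Fin n} (h : b = Function.update a i (!(a i))) :
    a = Function.update b i (!(b i)) := by
  subst h
  funext j
  by_cases hj : j = i
  · subst hj; simp
  · simp [Function.update_of_ne hj]

lemma cubeWeight_update (a : Fin n → Bool) (i : Fin n) :
    cubeWeight n x a (Function.update a i (!(a i))) = x i (!(a i)) := by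
  rw [cubeWeight, Finset.sum_eq_single i]
  · rw [if_pos rfl, Function.update_self]
  · intro j _ hj
    rw [if_neg]
    intro hcon
    have := congrFun hcon i
    simp [Function.update_of_ne (Ne.symm hj)] at this
  · intro h
    exact absurd (Finset.mem_univ i) h

lemma cubeWeight_arc {a b : Fin n → Bool} {i : Fin n}
    (h : b = Function.update a i (!(a i))) :
    cubeWeight n x a b = x i (b i) := by
  subst h
  rw [cubeWeight_update, Function.update_self]

lemma cubeArc_symm {a b : Fin n → Bool} (h : cubeArc n a b) : cubeArc n b a := by
  obtain ⟨i, hi⟩ := h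
  exact ⟨i, flip_flip hi⟩

lemma prod_update {a b : Fin n → Bool} {i : Fin n}
    (h : b = Function.update a i (!(a i))) :
    x i (a i) * ∏ j, x j (b j) = x i (b i) * ∏ j, x j (a j) := by
  subst h
  rw [← Finset.mul_prod_erase Finset.univ
        (fun j => x j (Function.update a i (!(a i)) j)) (Finset.mem_univ i),
      ← Finset.mul_prod_erase Finset.univ (fun j => x j (a j)) (Finset.mem_univ i)]
  rw [Finset.prod_congr rfl
        (fun j hj => by rw [Function.update_of_ne (Finset.ne_of_mem_erase hj)] :
        ∀ j ∈ Finset.univ.erase i, x j (Function.update a i (!(a i)) j) = x j (a j)),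
      Function.update_self]
  ring

variable {f : (Fin n → Bool) → Option (Fin n → Bool)} {u v : Fin n → Bool}

lemma reroot_arc (hf : Acy f) (harc : ∀ a b, f a = some b → cubeArc n a b) {a b : Fin n → Bool}
    (h : reroot f v a = some b) : cubeArc n a b := by
  by_cases hav : a = v
  · subst hav; rw [reroot_root] at h; exact nomatch h
  · by_cases hp : RTG f v a
    · rw [reroot_path_eq hp hav] at h
      obtain rfl : pred f v a = b := Option.some.inj h
      exact cubeArc_symm (harc _ _ (pred_spec hp hav).2)
    · rw [reroot_eq_off hp] at h
      exact harc _ _ h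

/-- telescoping along the path from `a` to the root `u` -/
lemma tele (hf : Acy f) (hr : f u = none) (hs : ∀ a, a ≠ u → f a ≠ none)
    (harc : ∀ a b, f a = some b → cubeArc n a b) (a : Fin n → Bool) :
    (∏ c ∈ seg f a, (f c).elim (1:R) (fun d => cubeWeight n x d c)) * ∏ i, x i (u i)
      = (∏ c ∈ seg f a, (f c).elim (1:R) (cubeWeight n x c)) * ∏ i, x i (a i) := by
  induction a using (wf hf).induction with
  | _ a ih =>
    by_cases hau : a = u
    · subst hau
      rw [seg_root hr]
      simp [hr]
    · obtain ⟨b, hb⟩ := Option.ne_none_iff_exists'.mp (hs a hau)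
      obtain ⟨i, hi⟩ := harc a b hb
      have hnm : a ∉ seg f b := not_mem_seg_self hf hb
      have ihb := ih b (Relation.TransGen.single hb)
      rw [seg_insert hf hb, Finset.prod_insert hnm, Finset.prod_insert hnm, hb]
      simp only [Option.elim_some]
      rw [cubeWeight_arc x (flip_flip hi), cubeWeight_arc x hi]
      linear_combination (x i (a i)) * ihb
        + (∏ c ∈ seg f b, (f c).elim (1:R) (cubeWeight n x c)) * prod_update x hi

/-- product of re-rooted weights over a path segment -/
lemma tele_g (hf : Acy f) (hr : f u = none) (hs : ∀ a, a ≠ u → f a ≠ none) :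
    ∀ a, RTG f v a → a ≠ v →
    (∏ c ∈ seg f a, ((reroot f v) c).elim (1:R) (cubeWeight n x c))
      = ((reroot f v) a).elim (1:R) (cubeWeight n x a)
        * ∏ c ∈ seg f a, (f c).elim (1:R) (fun d => cubeWeight n x d c) := by
  intro a
  induction a using (wf hf).induction with
  | _ a ih =>
    intro hva hav
    by_cases hau : a = u
    · subst hau
      rw [seg_root hr, Finset.prod_singleton, Finset.prod_singleton, hr]
      simp
    · obtain ⟨b, hb⟩ := Option.ne_none_iff_exists'.mp (hs a hau)
      have hvb : RTG f v b := hva.tail hb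
      have hbv : b ≠ v := by rintro rfl; exact hf _ (Relation.TransGen.tail' hva hb)
      have hnm : a ∉ seg f b := not_mem_seg_self hf hb
      have hgb : reroot f v b = some a := reroot_eq_of_path hf hvb hbv hva hb
      rw [seg_insert hf hb, Finset.prod_insert hnm, Finset.prod_insert hnm,
          ih b (Relation.TransGen.single hb) hvb hbv, hgb, hb]
      try simp only [Option.elim_some]
      try ring

lemma tele_g_root (hf : Acy f) (hr : f u = none) (hs : ∀ a, a ≠ u → f a ≠ none) :
    ∏ c ∈ seg f v, ((reroot f v) c).elim (1:R) (cubeWeight n x c)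
      = ∏ c ∈ seg f v, (f c).elim (1:R) (fun d => cubeWeight n x d c) := by
  by_cases huv : v = u
  · subst huv
    rw [seg_root hr, Finset.prod_singleton, Finset.prod_singleton, hr, reroot_root]
    simp
  · obtain ⟨b, hb⟩ := Option.ne_none_iff_exists'.mp (hs v huv)
    have hvb : RTG f v b := Relation.ReflTransGen.single hb
    have hbv : b ≠ v := by rintro rfl; exact hf _ (Relation.TransGen.single hb)
    have hnm : v ∉ seg f b := not_mem_seg_self hf hb
    have hgb : reroot f v b = some v := reroot_eq_of_path hf hvb hbv .refl hb
    rw [seg_insert hf hb, Finset.prod_insert hnm, Finset.prod_insert hnm,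
        tele_g x hf hr hs b hvb hbv, hgb, hb, reroot_root]
    simp

/-- the per-tree weight identity under re-rooting -/
lemma per_tree (hf : Acy f) (hr : f u = none) (hs : ∀ a, a ≠ u → f a ≠ none)
    (harc : ∀ a b, f a = some b → cubeArc n a b) :
    (∏ a, ((reroot f v) a).elim (1:R) (cubeWeight n x a)) * ∏ i, x i (u i)
      = (∏ a, (f a).elim (1:R) (cubeWeight n x a)) * ∏ i, x i (v i) := by
  rw [← Finset.prod_mul_prod_compl (seg f v)
        (fun a => ((reroot f v) a).elim (1:R) (cubeWeight n x a)),
      ← Finset.prod_mul_prod_compl (seg f v)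
        (fun a => (f a).elim (1:R) (cubeWeight n x a))]
  have hoff : ∏ a ∈ (seg f v)ᶜ, ((reroot f v) a).elim (1:R) (cubeWeight n x a)
      = ∏ a ∈ (seg f v)ᶜ, (f a).elim (1:R) (cubeWeight n x a) := by
    refine Finset.prod_congr rfl fun a ha => ?_
    rw [reroot_eq_off (by simpa [mem_seg] using Finset.mem_compl.mp ha)]
  rw [hoff, tele_g_root x hf hr hs]
  linear_combination
    (∏ a ∈ (seg f v)ᶜ, (f a).elim (1:R) (cubeWeight n x a)) * tele x hf hr hs harc v

/-- re-rooting preserves the spanning-tree property -/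
lemma reroot_mem (hT : IsRootedForest (cubeArc n) f ∧ f u = none ∧ ∀ a, a ≠ u → f a ≠ none) :
    IsRootedForest (cubeArc n) (reroot f v) ∧ reroot f v v = none ∧
      ∀ a, a ≠ v → reroot f v a ≠ none := by
  obtain ⟨⟨harc, hacy⟩, hr, hs⟩ := hT
  have hf : Acy f := hacy
  refine ⟨⟨fun a b h => reroot_arc hf harc h, reroot_acy (u := u) hf hs⟩,
    reroot_root, fun a hav => reroot_none_iff (u := u) hf hs hav⟩

end cube
end
end RerootAux
/-- Re-rooting relation for spanning-tree enumerators of the hypercube: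
`T_{C_n,u}(x) · ∏ᵢ x_{i,v_i} = T_{C_n,v}(x) · ∏ᵢ x_{i,u_i}`. -/
theorem hypercube_tree_enumerator_reroot {R : Type*} [CommRing R]
    (n : ℕ) (x : Fin n → Bool → R) (u v : Fin n → Bool) :
    cubeTreeEnum n x u * ∏ i : Fin n, x i (v i) =
      cubeTreeEnum n x v * ∏ i : Fin n, x i (u i) := by
  classical
  rw [cubeTreeEnum, cubeTreeEnum, Finset.sum_mul, Finset.sum_mul]
  refine Finset.sum_nbij' (fun f => RerootAux.reroot f v) (fun g => RerootAux.reroot g u)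
    ?_ ?_ ?_ ?_ ?_
  · intro f hf
    rw [Finset.mem_filter] at hf ⊢
    exact ⟨Finset.mem_univ _, RerootAux.reroot_mem hf.2⟩
  · intro g hg
    rw [Finset.mem_filter] at hg ⊢
    exact ⟨Finset.mem_univ _, RerootAux.reroot_mem hg.2⟩
  · intro f hf
    rw [Finset.mem_filter] at hf
    obtain ⟨-, ⟨-, hacy⟩, hr, hs⟩ := hf
    exact RerootAux.reroot_reroot hacy hr hs
  · intro g hg
    rw [Finset.mem_filter] at hg
    obtain ⟨-, ⟨-, hacy⟩, hr, hs⟩ := hg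
    exact RerootAux.reroot_reroot hacy hr hs
  · intro f hf
    rw [Finset.mem_filter] at hf
    obtain ⟨-, ⟨harc, hacy⟩, hr, hs⟩ := hf
    exact (RerootAux.per_tree x hacy hr hs harc).symm
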